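/- For every fixed integer bimatrix A with Graver complexity g = g(A), the cardinality of the Graver basis of the n-fold product satisfies |G(A⁽ⁿ⁾)| ≤ C(n, g) · |G(A⁽ᵍ⁾)| for all n ≥ g, where C(n,g) is the binomial coefficient; in particular |G(A⁽ⁿ⁾)| = O(n^g). -/

import Mathlib

/-- The conformal partial order on integer vectors. -/
def IsConformal {ι : Type*} (x y : ι → ℤ) : Prop :=
  ∀ i, x i * y i ≥ 0 ∧ |x i| ≤ |y i|

/-- The Graver basis of an integer matrix. -/
def Graver {κ ι : Type*} [Fintype ι] (A : Matrix κ ι ℤ) : Set (ι → ℤ) :=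
  {x | x ≠ 0 ∧ A.mulVec x = 0 ∧
    ∀ y : ι → ℤ, y ≠ 0 → A.mulVec y = 0 → IsConformal y x → y = x}

/-- The n-fold product of the bimatrix with blocks `A1` and `A2`. -/
def nfold {r s t : ℕ} (A1 : Matrix (Fin r) (Fin t) ℤ)
    (A2 : Matrix (Fin s) (Fin t) ℤ) (n : ℕ) :
    Matrix (Fin r ⊕ Fin n × Fin s) (Fin n × Fin t) ℤ :=
  Matrix.of fun i q =>
    match i with
    | Sum.inl a => A1 a q.2
    | Sum.inr p => if p.1 = q.1 then A2 p.2 q.2 else 0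

section Helpers

variable {m n t r s : ℕ}

/-- Extension of a vector along an injection of brick indices. -/
noncomputable def extV (e : Fin m → Fin n) (y : Fin m × Fin t → ℤ) :
    Fin n × Fin t → ℤ :=
  fun p => if h : ∃ i, e i = p.1 then y (h.choose, p.2) else 0

/-- Restriction of a vector along an injection of brick indices. -/
def resV (e : Fin m → Fin n) (x : Fin n × Fin t → ℤ) : Fin m × Fin t → ℤ :=
  fun p => x (e p.1, p.2)

lemma extV_apply_not_mem {e : Fin m → Fin n} {y : Fin m × Fin t → ℤ}
    {p : Fin n × Fin t} (h : ∀ i, e i ≠ p.1) : extV e y p = 0 := by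
  apply dif_neg
  rintro ⟨i, hi⟩
  exact h i hi

lemma resV_extV {e : Fin m → Fin n} (he : Function.Injective e)
    (y : Fin m × Fin t → ℤ) : resV e (extV e y) = y := by
  funext p
  have h : ∃ i, e i = e p.1 := ⟨p.1, rfl⟩
  simp only [resV, extV, dif_pos h]
  congr 1
  exact Prod.ext (he h.choose_spec) rfl

lemma extV_apply_mem {e : Fin m → Fin n} (he : Function.Injective e)
    (y : Fin m × Fin t → ℤ) (i : Fin m) (j : Fin t) :
    extV e y (e i, j) = y (i, j) :=
  congrFun (resV_extV he y) (i, j)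

lemma extV_resV {e : Fin m → Fin n} (he : Function.Injective e)
    {x : Fin n × Fin t → ℤ}
    (hx : ∀ p : Fin n × Fin t, (∀ i, e i ≠ p.1) → x p = 0) :
    extV e (resV e x) = x := by
  funext p
  by_cases h : ∃ i, e i = p.1
  · obtain ⟨i, hi⟩ := h
    have : p = (e i, p.2) := Prod.ext hi.symm rfl
    rw [this, extV_apply_mem he]
    rfl
  · push_neg at h
    rw [extV_apply_not_mem h, hx p h]

lemma extV_ne_zero {e : Fin m → Fin n} (he : Function.Injective e)
    {y : Fin m × Fin t → ℤ} (hy : y ≠ 0) : extV e y ≠ 0 := by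
  intro h
  apply hy
  rw [← resV_extV he y, h]
  funext p; rfl

lemma extV_zero {e : Fin m → Fin n} : extV (t := t) e 0 = 0 := by
  funext p
  unfold extV
  split <;> rfl

/-- Row computation: A1 rows. -/
lemma mulVec_extV_inl {A1 : Matrix (Fin r) (Fin t) ℤ} {A2 : Matrix (Fin s) (Fin t) ℤ}
    {e : Fin m → Fin n} (he : Function.Injective e) (y : Fin m × Fin t → ℤ) (a : Fin r) :
    (nfold A1 A2 n).mulVec (extV e y) (Sum.inl a) =
      (nfold A1 A2 m).mulVec y (Sum.inl a) := by
  classical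
  let emb : Fin m × Fin t ↪ Fin n × Fin t :=
    ⟨fun p => (e p.1, p.2), by
      rintro ⟨i, j⟩ ⟨i', j'⟩ h
      simp only [Prod.mk.injEq] at h
      exact Prod.ext (he h.1) h.2⟩
  unfold Matrix.mulVec dotProduct
  have hsub : (Finset.univ.map emb) ⊆ Finset.univ := Finset.subset_univ _
  rw [show (Finset.univ.sum fun q => nfold A1 A2 n (Sum.inl a) q * extV e y q)
      = ((Finset.univ.map emb).sum fun q => nfold A1 A2 n (Sum.inl a) q * extV e y q) from
    (Finset.sum_subset hsub ?_).symm]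
  · rw [Finset.sum_map]
    apply Finset.sum_congr rfl
    intro p _
    show A1 a p.2 * extV e y (e p.1, p.2) = A1 a p.2 * y p
    rw [extV_apply_mem he y p.1 p.2]
  · intro q _ hq
    have : ∀ i, e i ≠ q.1 := by
      intro i hi
      apply hq
      simp only [Finset.mem_map, Finset.mem_univ, true_and]
      exact ⟨(i, q.2), Prod.ext hi rfl⟩
    rw [extV_apply_not_mem this, mul_zero]

/-- Row computation: A2 rows in the range of `e`. -/
lemma mulVec_extV_inr_mem {A1 : Matrix (Fin r) (Fin t) ℤ} {A2 : Matrix (Fin s) (Fin t) ℤ}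
    {e : Fin m → Fin n} (he : Function.Injective e) (y : Fin m × Fin t → ℤ)
    (i : Fin m) (b : Fin s) :
    (nfold A1 A2 n).mulVec (extV e y) (Sum.inr (e i, b)) =
      (nfold A1 A2 m).mulVec y (Sum.inr (i, b)) := by
  classical
  unfold Matrix.mulVec dotProduct
  rw [Fintype.sum_prod_type, Fintype.sum_prod_type]
  rw [Finset.sum_eq_single (e i), Finset.sum_eq_single i]
  · apply Finset.sum_congr rfl
    intro j _
    show (if e i = e i then A2 b j else 0) * extV e y (e i, j)
      = (if i = i then A2 b j else 0) * y (i, j)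
    rw [if_pos rfl, if_pos rfl, extV_apply_mem he]
  · intro k _ hk
    apply Finset.sum_eq_zero
    intro j _
    show (if i = k then A2 b j else 0) * y (k, j) = 0
    rw [if_neg (Ne.symm hk), zero_mul]
  · intro h; exact absurd (Finset.mem_univ i) h
  · intro k _ hk
    apply Finset.sum_eq_zero
    intro j _
    show (if e i = k then A2 b j else 0) * extV e y (k, j) = 0
    rw [if_neg (fun h => hk h.symm), zero_mul]
  · intro h; exact absurd (Finset.mem_univ (e i)) h

/-- Row computation: A2 rows outside the range of `e`. -/
lemma mulVec_extV_inr_not_mem {A1 : Matrix (Fin r) (Fin t) ℤ} {A2 : Matrix (Fin s) (Fin t) ℤ}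
    {e : Fin m → Fin n} (y : Fin m × Fin t → ℤ)
    {k : Fin n} (hk : ∀ i, e i ≠ k) (b : Fin s) :
    (nfold A1 A2 n).mulVec (extV e y) (Sum.inr (k, b)) = 0 := by
  classical
  unfold Matrix.mulVec dotProduct
  apply Finset.sum_eq_zero
  intro q _
  by_cases h : k = q.1
  · rw [extV_apply_not_mem (h ▸ hk), mul_zero]
  · show (if k = q.1 then A2 b q.2 else 0) * extV e y q = 0
    rw [if_neg h, zero_mul]

lemma mulVec_extV_zero_iff {A1 : Matrix (Fin r) (Fin t) ℤ} {A2 : Matrix (Fin s) (Fin t) ℤ}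
    {e : Fin m → Fin n} (he : Function.Injective e) (y : Fin m × Fin t → ℤ) :
    (nfold A1 A2 n).mulVec (extV e y) = 0 ↔ (nfold A1 A2 m).mulVec y = 0 := by
  constructor
  · intro h
    funext q
    match q with
    | Sum.inl a => rw [← mulVec_extV_inl he y a, h]; rfl
    | Sum.inr (i, b) => rw [← mulVec_extV_inr_mem he y i b, h]; rfl
  · intro h
    funext q
    match q with
    | Sum.inl a => rw [mulVec_extV_inl he y a, h]; rfl
    | Sum.inr (k, b) =>
      by_cases hk : ∃ i, e i = k
      · obtain ⟨i, hi⟩ := hk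
        rw [← hi, mulVec_extV_inr_mem he y i b, h]; rfl
      · push_neg at hk
        exact mulVec_extV_inr_not_mem y hk b

lemma isConformal_resV {e : Fin m → Fin n} {z x : Fin n × Fin t → ℤ}
    (h : IsConformal z x) : IsConformal (resV e z) (resV e x) :=
  fun p => h (e p.1, p.2)

lemma isConformal_extV {e : Fin m → Fin n} (he : Function.Injective e)
    {w y : Fin m × Fin t → ℤ} (h : IsConformal w y) :
    IsConformal (extV e w) (extV e y) := by
  intro p
  by_cases hp : ∃ i, e i = p.1
  · obtain ⟨i, hi⟩ := hp
    have : p = (e i, p.2) := Prod.ext hi.symm rfl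
    rw [this, extV_apply_mem he, extV_apply_mem he]
    exact h (i, p.2)
  · push_neg at hp
    rw [extV_apply_not_mem hp, extV_apply_not_mem hp]
    simp

lemma vanish_of_isConformal {e : Fin m → Fin n} {z x : Fin n × Fin t → ℤ}
    (h : IsConformal z x)
    (hx : ∀ p : Fin n × Fin t, (∀ i, e i ≠ p.1) → x p = 0) :
    ∀ p : Fin n × Fin t, (∀ i, e i ≠ p.1) → z p = 0 := by
  intro p hp
  have := (h p).2
  rw [hx p hp] at this
  simpa using this

/-- Lifting a Graver element along an injection. -/
lemma graver_extV {A1 : Matrix (Fin r) (Fin t) ℤ} {A2 : Matrix (Fin s) (Fin t) ℤ}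
    {e : Fin m → Fin n} (he : Function.Injective e) {y : Fin m × Fin t → ℤ}
    (hy : y ∈ Graver (nfold A1 A2 m)) : extV e y ∈ Graver (nfold A1 A2 n) := by
  obtain ⟨hy0, hyA, hymin⟩ := hy
  refine ⟨extV_ne_zero he hy0, (mulVec_extV_zero_iff he y).2 hyA, ?_⟩
  intro z hz0 hzA hzc
  have hvan : ∀ p : Fin n × Fin t, (∀ i, e i ≠ p.1) → z p = 0 :=
    vanish_of_isConformal hzc (fun p hp => extV_apply_not_mem hp)
  have hze : extV e (resV e z) = z := extV_resV he hvan
  have hrz0 : resV e z ≠ 0 := by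
    intro h
    apply hz0
    rw [← hze, h, extV_zero]
  have hrzA : (nfold A1 A2 m).mulVec (resV e z) = 0 :=
    (mulVec_extV_zero_iff he (resV e z)).1 (by rw [hze]; exact hzA)
  have hrzc : IsConformal (resV e z) y := by
    have := isConformal_resV (e := e) hzc
    rwa [resV_extV he] at this
  have := hymin (resV e z) hrz0 hrzA hrzc
  rw [← hze, this]

/-- Restricting a Graver element supported inside the range of `e`. -/
lemma graver_resV {A1 : Matrix (Fin r) (Fin t) ℤ} {A2 : Matrix (Fin s) (Fin t) ℤ}
    {e : Fin m → Fin n} (he : Function.Injective e) {x : Fin n × Fin t → ℤ}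
    (hx : x ∈ Graver (nfold A1 A2 n))
    (hvan : ∀ p : Fin n × Fin t, (∀ i, e i ≠ p.1) → x p = 0) :
    resV e x ∈ Graver (nfold A1 A2 m) := by
  obtain ⟨hx0, hxA, hxmin⟩ := hx
  have hxe : extV e (resV e x) = x := extV_resV he hvan
  have hr0 : resV e x ≠ 0 := by
    intro h
    apply hx0
    rw [← hxe, h, extV_zero]
  refine ⟨hr0, (mulVec_extV_zero_iff he (resV e x)).1 (by rw [hxe]; exact hxA), ?_⟩
  intro w hw0 hwA hwc
  have h1 : extV e w ≠ 0 := extV_ne_zero he hw0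
  have h2 : (nfold A1 A2 n).mulVec (extV e w) = 0 := (mulVec_extV_zero_iff he w).2 hwA
  have h3 : IsConformal (extV e w) x := by
    have := isConformal_extV he hwc
    rwa [hxe] at this
  have h4 := hxmin (extV e w) h1 h2 h3
  rw [← resV_extV he w, h4]

end Helpers

lemma orderEmbOfFin_congr {α : Type*} [LinearOrder α] {T T' : Finset α} {k : ℕ}
    (h : T = T') (hT : T.card = k) (hT' : T'.card = k) :
    ⇑(T.orderEmbOfFin hT) = ⇑(T'.orderEmbOfFin hT') := by subst h; rfl

/-- If g is the Graver complexity (bounding the type of all Graver basis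
elements of all n-fold products), then the cardinality of the Graver basis
of the n-fold product is at most C(n,g)·|G(A⁽ᵍ⁾)| for all n ≥ g;
in particular it is O(n^g). -/
theorem graver_cardinality_bound (r s t : ℕ)
    (A1 : Matrix (Fin r) (Fin t) ℤ) (A2 : Matrix (Fin s) (Fin t) ℤ)
    (g : ℕ)
    (hg : ∀ (n : ℕ) (x : Fin n × Fin t → ℤ),
      x ∈ Graver (nfold A1 A2 n) → {k : Fin n | ∃ j, x (k, j) ≠ 0}.ncard ≤ g)
    (n : ℕ) (hn : g ≤ n) :
    (Graver (nfold A1 A2 n)).ncard ≤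
      Nat.choose n g * (Graver (nfold A1 A2 g)).ncard := by
  classical
  set Gn := Graver (nfold A1 A2 n) with hGndef
  set Gg := Graver (nfold A1 A2 g) with hGgdef
  by_cases hGg : Gg.Finite
  swap
  · -- `Gg` infinite ⇒ `Gn` infinite ⇒ LHS = 0
    have hinf : Gg.Infinite := hGg
    haveI : Infinite ↥Gg := hinf.to_subtype
    have hemb : Function.Injective (Fin.castLE hn) := Fin.castLE_injective hn
    let f : ↥Gg → ↥Gn := fun y => ⟨extV (Fin.castLE hn) y.1, graver_extV hemb y.2⟩
    have finj : Function.Injective f := by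
      intro y y' h
      have := congrArg (fun z : ↥Gn => resV (Fin.castLE hn) z.1) h
      simp only [f, resV_extV hemb] at this
      exact Subtype.ext this
    haveI : Infinite ↥Gn := Infinite.of_injective f finj
    have : Gn.Infinite := Set.infinite_coe_iff.1 inferInstance
    rw [this.ncard]
    exact Nat.zero_le _
  · -- main case
    have key : ∀ x ∈ Gn, ∃ (T : Finset (Fin n)) (hT : T.card = g),
        resV (T.orderEmbOfFin hT) x ∈ Gg ∧
        extV (T.orderEmbOfFin hT) (resV (T.orderEmbOfFin hT) x) = x := by
      intro x hx
      set S : Set (Fin n) := {k | ∃ j, x (k, j) ≠ 0} with hSdef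
      have hSfin : S.Finite := S.toFinite
      have hScard : hSfin.toFinset.card ≤ g := by
        rw [← Set.ncard_eq_toFinset_card S hSfin]
        exact hg n x hx
      obtain ⟨T, hST, hTcard⟩ := Finset.exists_superset_card_eq hScard
        (by rw [Fintype.card_fin]; exact hn)
      have he : Function.Injective ⇑(T.orderEmbOfFin hTcard) :=
        (T.orderEmbOfFin hTcard).injective
      have hvan : ∀ p : Fin n × Fin t, (∀ i, T.orderEmbOfFin hTcard i ≠ p.1) → x p = 0 := by
        intro p hp
        by_contra hxp
        have hpS : p.1 ∈ S := ⟨p.2, hxp⟩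
        have hpT : p.1 ∈ T := hST (hSfin.mem_toFinset.2 hpS)
        have : p.1 ∈ Set.range ⇑(T.orderEmbOfFin hTcard) := by
          rw [Finset.range_orderEmbOfFin]
          exact hpT
        obtain ⟨i, hi⟩ := this
        exact hp i hi
      exact ⟨T, hTcard, graver_resV he hx hvan, extV_resV he hvan⟩
    haveI : Finite ↥Gg := hGg.to_subtype
    let f : ↥Gn → {T : Finset (Fin n) // T.card = g} × ↥Gg := fun x =>
      ⟨⟨(key x.1 x.2).choose, (key x.1 x.2).choose_spec.choose⟩,
        ⟨resV ((key x.1 x.2).choose.orderEmbOfFin (key x.1 x.2).choose_spec.choose) x.1,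
          (key x.1 x.2).choose_spec.choose_spec.1⟩⟩
    have finj : Function.Injective f := by
      intro x y hxy
      have hT : (key x.1 x.2).choose = (key y.1 y.2).choose :=
        congrArg (fun z => z.1.1) hxy
      have hres := congrArg (fun z => z.2.1) hxy
      simp only [f] at hres
      have hemb : ⇑((key x.1 x.2).choose.orderEmbOfFin (key x.1 x.2).choose_spec.choose)
          = ⇑((key y.1 y.2).choose.orderEmbOfFin (key y.1 y.2).choose_spec.choose) :=
        orderEmbOfFin_congr hT _ _
      apply Subtype.ext
      calc x.1 = extV _ (resV ((key x.1 x.2).choose.orderEmbOfFin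
              (key x.1 x.2).choose_spec.choose) x.1) :=
            (key x.1 x.2).choose_spec.choose_spec.2.symm
        _ = extV _ (resV ((key y.1 y.2).choose.orderEmbOfFin
              (key y.1 y.2).choose_spec.choose) y.1) := by rw [hemb] at hres ⊢; rw [hres]
        _ = y.1 := (key y.1 y.2).choose_spec.choose_spec.2
    have hcard := Nat.card_le_card_of_injective f finj
    rw [Nat.card_prod, Nat.card_coe_set_eq, Nat.card_coe_set_eq,
      Nat.card_eq_fintype_card, Fintype.card_finset_len, Fintype.card_fin] at hcard
    exact hcard
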